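/- arXiv:2301.03229 — 5 statements merged into one kernel-verified Lean document; each statement's English description precedes it below -/
import Mathlib

section
/- For all but countably many pairs (θ₁, θ₂) in (0,π)×(0,π) and for fixed nonnegative integers k₁, k₂ ∈ {0,1,2}, the limit as T,S → ∞ of (1/(T^{k₁+1} S^{k₂+1})) Σ_{t=1}^{T} Σ_{s=1}^{S} t^{k₁} s^{k₂} cos²(θ₁ t + θ₂ s) equals 1/(2(k₁+1)(k₂+1)). -/
open Filter Real Topology



lemma aux_tele {M : Type*} [AddCommGroup M] (f : ℕ → M) (n : ℕ) :
    ∑ j ∈ Finset.Ico 1 (n + 1), (f j - f (j - 1)) = f n - f 0 := by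
  rw [Finset.sum_Ico_eq_sum_range]
  have : ∀ i : ℕ, f (1 + i) - f (1 + i - 1) = f (i + 1) - f i := by
    intro i
    congr 1 <;> congr 1 <;> omega
  simp only [this, Nat.add_sub_cancel, Finset.sum_range_sub f n]

lemma aux_geom (z : ℂ) (hz : z ≠ 1) (hz1 : ‖z‖ = 1) (m n : ℕ) :
    ‖∑ t ∈ Finset.Ico m n, z ^ t‖ ≤ 2 / ‖z - 1‖ := by
  have hpos : 0 < ‖z - 1‖ := by
    rw [norm_pos_iff]
    exact sub_ne_zero.2 hz
  rcases le_or_gt m n with h | h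
  · rw [geom_sum_Ico hz h, norm_div]
    gcongr
    calc ‖z ^ n - z ^ m‖ ≤ ‖z ^ n‖ + ‖z ^ m‖ := norm_sub_le _ _
      _ = 2 := by simp [norm_pow, hz1]; norm_num
  · rw [Finset.Ico_eq_empty (by omega), Finset.sum_empty, norm_zero]
    positivity

lemma aux_weighted (k : ℕ) (z : ℂ) (hz : z ≠ 1) (hz1 : ‖z‖ = 1) (n : ℕ) :
    ‖∑ t ∈ Finset.Icc 1 n, (t : ℂ) ^ k * z ^ t‖ ≤ 2 / ‖z - 1‖ * (n : ℝ) ^ k := by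
  have hM : 0 ≤ 2 / ‖z - 1‖ := by positivity
  rcases Nat.eq_zero_or_pos k with hk | hk
  · subst hk
    simp only [pow_zero, one_mul]
    rw [← Finset.Ico_add_one_right_eq_Icc]
    simpa using aux_geom z hz hz1 1 (n + 1)
  · have hk0 : k ≠ 0 := hk.ne'
    have key : ∑ t ∈ Finset.Icc 1 n, (t : ℂ) ^ k * z ^ t
        = ∑ j ∈ Finset.Ico 1 (n + 1),
            (((j : ℂ) ^ k - ((j - 1 : ℕ) : ℂ) ^ k) * ∑ t ∈ Finset.Ico j (n + 1), z ^ t) := by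
      rw [← Finset.Ico_add_one_right_eq_Icc]
      have step1 : ∀ t ∈ Finset.Ico 1 (n + 1), (t : ℂ) ^ k * z ^ t
          = ∑ j ∈ Finset.Ico 1 (t + 1), ((j : ℂ) ^ k - ((j - 1 : ℕ) : ℂ) ^ k) * z ^ t := by
        intro t ht
        rw [← Finset.sum_mul]
        congr 1
        rw [aux_tele (fun j : ℕ => (j : ℂ) ^ k) t]
        simp [zero_pow hk0]
      rw [Finset.sum_congr rfl step1, ← Finset.sum_Ico_Ico_comm]
      exact Finset.sum_congr rfl fun j _ => (Finset.mul_sum _ _ _).symm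
    rw [key]
    calc ‖∑ j ∈ Finset.Ico 1 (n + 1),
            (((j : ℂ) ^ k - ((j - 1 : ℕ) : ℂ) ^ k) * ∑ t ∈ Finset.Ico j (n + 1), z ^ t)‖
        ≤ ∑ j ∈ Finset.Ico 1 (n + 1),
            ‖(((j : ℂ) ^ k - ((j - 1 : ℕ) : ℂ) ^ k) * ∑ t ∈ Finset.Ico j (n + 1), z ^ t)‖ :=
          norm_sum_le _ _
      _ ≤ ∑ j ∈ Finset.Ico 1 (n + 1),
            ((j : ℝ) ^ k - ((j - 1 : ℕ) : ℝ) ^ k) * (2 / ‖z - 1‖) := by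
          apply Finset.sum_le_sum
          intro j hj
          rw [norm_mul]
          have hnn : (0:ℝ) ≤ (j : ℝ) ^ k - ((j - 1 : ℕ) : ℝ) ^ k := by
            have : ((j - 1 : ℕ) : ℝ) ≤ (j : ℝ) := by exact_mod_cast Nat.sub_le j 1
            have := pow_le_pow_left₀ (by positivity) this k
            linarith
          have hcoef : ‖((j : ℂ) ^ k - ((j - 1 : ℕ) : ℂ) ^ k)‖
              = (j : ℝ) ^ k - ((j - 1 : ℕ) : ℝ) ^ k := by
            have : ((j : ℂ) ^ k - ((j - 1 : ℕ) : ℂ) ^ k)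
                = (((j : ℝ) ^ k - ((j - 1 : ℕ) : ℝ) ^ k : ℝ) : ℂ) := by push_cast; ring
            rw [this, Complex.norm_real, Real.norm_eq_abs, abs_of_nonneg hnn]
          rw [hcoef]
          exact mul_le_mul_of_nonneg_left (aux_geom z hz hz1 j (n + 1)) hnn
      _ = (∑ j ∈ Finset.Ico 1 (n + 1), ((j : ℝ) ^ k - ((j - 1 : ℕ) : ℝ) ^ k)) * (2 / ‖z - 1‖) :=
          (Finset.sum_mul _ _ _).symm
      _ = (n : ℝ) ^ k * (2 / ‖z - 1‖) := by
          rw [aux_tele (fun j : ℕ => (j : ℝ) ^ k) n]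
          simp [zero_pow hk0]
      _ = 2 / ‖z - 1‖ * (n : ℝ) ^ k := mul_comm _ _


lemma aux_main (k : ℕ) (hk : k ∈ ({0, 1, 2} : Set ℕ)) :
    Tendsto (fun n : ℕ => (∑ t ∈ Finset.Icc 1 n, (t : ℝ) ^ k) / (n : ℝ) ^ (k + 1))
      atTop (𝓝 (1 / ((k : ℝ) + 1))) := by
  have hinv : Tendsto (fun n : ℕ => 1 / (n : ℝ)) atTop (𝓝 0) :=
    tendsto_one_div_atTop_nhds_zero_nat
  rcases hk with hk | hk | hk
  · subst hk
    have h0 : ∀ n : ℕ, ∑ t ∈ Finset.Icc 1 n, (t : ℝ) ^ 0 = n := by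
      intro n; simp
    apply Tendsto.congr' ?_ tendsto_const_nhds
    filter_upwards [eventually_ge_atTop 1] with n hn
    have hn' : (0:ℝ) < n := by exact_mod_cast hn
    rw [h0]
    norm_num
    field_simp
  · subst hk
    have h1 : ∀ n : ℕ, ∑ t ∈ Finset.Icc 1 n, (t : ℝ) ^ 1 = n * (n + 1) / 2 := by
      intro n
      induction n with
      | zero => simp
      | succ m ih => rw [Finset.sum_Icc_succ_top (by omega), ih]; push_cast; ring
    have hlim : Tendsto (fun n : ℕ => (1 + 1 / (n : ℝ)) / 2) atTop (𝓝 ((1 + 0) / 2)) :=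
      (tendsto_const_nhds.add hinv).div_const 2
    apply Tendsto.congr' ?_ (by convert hlim using 2; norm_num)
    filter_upwards [eventually_ge_atTop 1] with n hn
    have hn' : (0:ℝ) < n := by exact_mod_cast hn
    rw [h1]
    field_simp
  · subst hk
    have h2 : ∀ n : ℕ, ∑ t ∈ Finset.Icc 1 n, (t : ℝ) ^ 2 = n * (n + 1) * (2 * n + 1) / 6 := by
      intro n
      induction n with
      | zero => simp
      | succ m ih => rw [Finset.sum_Icc_succ_top (by omega), ih]; push_cast; ring
    have hlim : Tendsto (fun n : ℕ => (1 + 1 / (n : ℝ)) * (2 + 1 / (n : ℝ)) / 6) atTop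
        (𝓝 ((1 + 0) * (2 + 0) / 6)) :=
      ((tendsto_const_nhds.add hinv).mul (tendsto_const_nhds.add hinv)).div_const 6
    apply Tendsto.congr' ?_ (by convert hlim using 2 <;> norm_num)
    filter_upwards [eventually_ge_atTop 1] with n hn
    have hn' : (0:ℝ) < n := by exact_mod_cast hn
    rw [h2]
    field_simp


lemma aux_zne (θ : ℝ) (h0 : 0 < θ) (hπ : θ < π) :
    Complex.exp ((2 * θ : ℝ) * Complex.I) ≠ 1 := by
  intro h
  rw [Complex.exp_eq_one_iff] at h
  obtain ⟨m, hm⟩ := h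
  have hm' : ((2 * θ : ℝ) : ℂ) * Complex.I = ((m * (2 * π) : ℝ) : ℂ) * Complex.I := by
    rw [hm]; push_cast; ring
  have h2 : (2 * θ : ℝ) = m * (2 * π) := by
    exact_mod_cast mul_right_cancel₀ Complex.I_ne_zero hm'
  have hπ0 := Real.pi_pos
  have h3 : (0 : ℝ) < m := by nlinarith
  have h4 : (1 : ℝ) ≤ m := by exact_mod_cast (by exact_mod_cast h3 : (0 : ℤ) < m)
  nlinarith

lemma aux_re (r x : ℝ) : ((r : ℂ) * Complex.exp ((x : ℝ) * Complex.I)).re = r * Real.cos x := by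
  rw [Complex.mul_re]
  simp [Complex.exp_ofReal_mul_I_re]

/-- Vinogradov-type averaging lemma for the 2-D sinusoidal model: for all but
countably many frequency pairs `(θ₁, θ₂)` in `(0,π) × (0,π)` and for
`k₁, k₂ ∈ {0,1,2}`, the normalized double sum converges as `T, S → ∞`. -/
theorem stmt_0 :
    ∃ C : Set (ℝ × ℝ), C.Countable ∧
      ∀ θ₁ θ₂ : ℝ, θ₁ ∈ Set.Ioo 0 π → θ₂ ∈ Set.Ioo 0 π → (θ₁, θ₂) ∉ C →
        ∀ k₁ k₂ : ℕ, k₁ ∈ ({0, 1, 2} : Set ℕ) → k₂ ∈ ({0, 1, 2} : Set ℕ) →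
          Tendsto
            (fun TS : ℕ × ℕ =>
              (1 / ((TS.1 : ℝ) ^ (k₁ + 1) * (TS.2 : ℝ) ^ (k₂ + 1))) *
                ∑ t ∈ Finset.Icc 1 TS.1, ∑ s ∈ Finset.Icc 1 TS.2,
                  (t : ℝ) ^ k₁ * (s : ℝ) ^ k₂ * (Real.cos (θ₁ * t + θ₂ * s) ^ 2))
            (atTop ×ˢ atTop)
            (𝓝 (1 / (2 * (k₁ + 1) * (k₂ + 1)))) := by
  refine ⟨∅, Set.countable_empty, ?_⟩
  rintro θ₁ θ₂ ⟨hθ₁0, hθ₁π⟩ ⟨hθ₂0, hθ₂π⟩ - k₁ k₂ hk₁ hk₂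
  set z₁ : ℂ := Complex.exp ((2 * θ₁ : ℝ) * Complex.I) with hz₁def
  set z₂ : ℂ := Complex.exp ((2 * θ₂ : ℝ) * Complex.I) with hz₂def
  have hz₁ : z₁ ≠ 1 := aux_zne θ₁ hθ₁0 hθ₁π
  have hz₂ : z₂ ≠ 1 := aux_zne θ₂ hθ₂0 hθ₂π
  have ha₁ : ‖z₁‖ = 1 := by
    rw [hz₁def]
    exact Complex.norm_exp_ofReal_mul_I _
  have ha₂ : ‖z₂‖ = 1 := by
    rw [hz₂def]
    exact Complex.norm_exp_ofReal_mul_I _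
  set M₁ : ℝ := 2 / ‖z₁ - 1‖ with hM₁def
  set M₂ : ℝ := 2 / ‖z₂ - 1‖ with hM₂def
  have hM₁ : 0 ≤ M₁ := by positivity
  have hM₂ : 0 ≤ M₂ := by positivity
  -- pointwise decomposition
  have key : ∀ T S : ℕ,
      (1 / ((T : ℝ) ^ (k₁ + 1) * (S : ℝ) ^ (k₂ + 1))) *
        ∑ t ∈ Finset.Icc 1 T, ∑ s ∈ Finset.Icc 1 S,
          (t : ℝ) ^ k₁ * (s : ℝ) ^ k₂ * (Real.cos (θ₁ * t + θ₂ * s) ^ 2)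
      = (1 / 2) * ((∑ t ∈ Finset.Icc 1 T, (t : ℝ) ^ k₁) / (T : ℝ) ^ (k₁ + 1)) *
          ((∑ s ∈ Finset.Icc 1 S, (s : ℝ) ^ k₂) / (S : ℝ) ^ (k₂ + 1))
        + (1 / ((T : ℝ) ^ (k₁ + 1) * (S : ℝ) ^ (k₂ + 1))) * (1 / 2) *
          ((∑ t ∈ Finset.Icc 1 T, (t : ℂ) ^ k₁ * z₁ ^ t) *
            (∑ s ∈ Finset.Icc 1 S, (s : ℂ) ^ k₂ * z₂ ^ s)).re := by
    intro T S
    have hterm : ∀ t s : ℕ,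
        (t : ℝ) ^ k₁ * (s : ℝ) ^ k₂ * (Real.cos (θ₁ * t + θ₂ * s) ^ 2)
        = (1 / 2) * ((t : ℝ) ^ k₁ * (s : ℝ) ^ k₂)
          + (1 / 2) * (((t : ℂ) ^ k₁ * z₁ ^ t) * ((s : ℂ) ^ k₂ * z₂ ^ s)).re := by
      intro t s
      have e1 : z₁ ^ t = Complex.exp ((2 * θ₁ * t : ℝ) * Complex.I) := by
        rw [hz₁def, ← Complex.exp_nat_mul]
        congr 1
        push_cast
        ring
      have e2 : z₂ ^ s = Complex.exp ((2 * θ₂ * s : ℝ) * Complex.I) := by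
        rw [hz₂def, ← Complex.exp_nat_mul]
        congr 1
        push_cast
        ring
      have eprod : ((t : ℂ) ^ k₁ * z₁ ^ t) * ((s : ℂ) ^ k₂ * z₂ ^ s)
          = (((t : ℝ) ^ k₁ * (s : ℝ) ^ k₂ : ℝ) : ℂ) *
              Complex.exp (((2 * θ₁ * t + 2 * θ₂ * s : ℝ)) * Complex.I) := by
        have harg : ((2 * θ₁ * t + 2 * θ₂ * s : ℝ) : ℂ) * Complex.I
            = ((2 * θ₁ * t : ℝ) : ℂ) * Complex.I + ((2 * θ₂ * s : ℝ) : ℂ) * Complex.I := by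
          push_cast; ring
        rw [e1, e2, harg, Complex.exp_add]
        push_cast
        ring
      rw [Real.cos_sq, eprod, aux_re]
      have harg2 : 2 * (θ₁ * t + θ₂ * s) = 2 * θ₁ * t + 2 * θ₂ * s := by ring
      rw [harg2]
      ring
    have hsum : ∑ t ∈ Finset.Icc 1 T, ∑ s ∈ Finset.Icc 1 S,
          ((t : ℝ) ^ k₁ * (s : ℝ) ^ k₂ * (Real.cos (θ₁ * t + θ₂ * s) ^ 2))
        = (1 / 2) * ((∑ t ∈ Finset.Icc 1 T, (t : ℝ) ^ k₁) * (∑ s ∈ Finset.Icc 1 S, (s : ℝ) ^ k₂))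
          + (1 / 2) * ((∑ t ∈ Finset.Icc 1 T, (t : ℂ) ^ k₁ * z₁ ^ t) *
              (∑ s ∈ Finset.Icc 1 S, (s : ℂ) ^ k₂ * z₂ ^ s)).re := by
      simp only [hterm]
      rw [Finset.sum_mul_sum (Finset.Icc 1 T) (Finset.Icc 1 S)
        (fun t : ℕ => (t : ℂ) ^ k₁ * z₁ ^ t) (fun s : ℕ => (s : ℂ) ^ k₂ * z₂ ^ s),
        Finset.sum_mul_sum (Finset.Icc 1 T) (Finset.Icc 1 S)
        (fun t : ℕ => (t : ℝ) ^ k₁) (fun s : ℕ => (s : ℝ) ^ k₂),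
        Complex.re_sum]
      simp only [Complex.re_sum, Finset.mul_sum, ← Finset.sum_add_distrib]
    rw [hsum]
    have hxy : (1 : ℝ) / ((T : ℝ) ^ (k₁ + 1) * (S : ℝ) ^ (k₂ + 1))
        = (1 / (T : ℝ) ^ (k₁ + 1)) * (1 / (S : ℝ) ^ (k₂ + 1)) := by
      rw [one_div, mul_inv, one_div, one_div]
    rw [hxy]
    ring
  -- main term limit
  have t1 : Tendsto (fun TS : ℕ × ℕ =>
      (∑ t ∈ Finset.Icc 1 TS.1, (t : ℝ) ^ k₁) / (TS.1 : ℝ) ^ (k₁ + 1))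
      (atTop ×ˢ atTop) (𝓝 (1 / ((k₁ : ℝ) + 1))) :=
    (aux_main k₁ hk₁).comp tendsto_fst
  have t2 : Tendsto (fun TS : ℕ × ℕ =>
      (∑ s ∈ Finset.Icc 1 TS.2, (s : ℝ) ^ k₂) / (TS.2 : ℝ) ^ (k₂ + 1))
      (atTop ×ˢ atTop) (𝓝 (1 / ((k₂ : ℝ) + 1))) :=
    (aux_main k₂ hk₂).comp tendsto_snd
  have hG := (t1.const_mul (1 / 2 : ℝ)).mul t2
  -- error term limit
  have hH : Tendsto (fun TS : ℕ × ℕ =>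
      (1 / ((TS.1 : ℝ) ^ (k₁ + 1) * (TS.2 : ℝ) ^ (k₂ + 1))) * (1 / 2) *
        ((∑ t ∈ Finset.Icc 1 TS.1, (t : ℂ) ^ k₁ * z₁ ^ t) *
          (∑ s ∈ Finset.Icc 1 TS.2, (s : ℂ) ^ k₂ * z₂ ^ s)).re)
      (atTop ×ˢ atTop) (𝓝 0) := by
    apply squeeze_zero_norm' (a := fun TS : ℕ × ℕ => (M₁ * M₂ / 2) * (1 / ((TS.1 : ℝ) * TS.2)))
    · have hev : ∀ᶠ TS : ℕ × ℕ in atTop ×ˢ atTop, 1 ≤ TS.1 ∧ 1 ≤ TS.2 := by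
        rw [Filter.prod_atTop_atTop_eq]
        filter_upwards [eventually_ge_atTop ((1, 1) : ℕ × ℕ)] with TS h
        exact ⟨h.1, h.2⟩
      filter_upwards [hev] with TS hTS
      obtain ⟨hT, hS⟩ := hTS
      have hT0 : (0 : ℝ) < TS.1 := by exact_mod_cast hT
      have hS0 : (0 : ℝ) < TS.2 := by exact_mod_cast hS
      have hb₁ := aux_weighted k₁ z₁ hz₁ ha₁ TS.1
      have hb₂ := aux_weighted k₂ z₂ hz₂ ha₂ TS.2
      rw [Real.norm_eq_abs, abs_mul]
      have h1 : |(1 / ((TS.1 : ℝ) ^ (k₁ + 1) * (TS.2 : ℝ) ^ (k₂ + 1))) * (1 / 2)|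
          = (1 / ((TS.1 : ℝ) ^ (k₁ + 1) * (TS.2 : ℝ) ^ (k₂ + 1))) * (1 / 2) := by
        rw [abs_of_nonneg]; positivity
      rw [h1]
      have h2 : |((∑ t ∈ Finset.Icc 1 TS.1, (t : ℂ) ^ k₁ * z₁ ^ t) *
          (∑ s ∈ Finset.Icc 1 TS.2, (s : ℂ) ^ k₂ * z₂ ^ s)).re|
          ≤ (M₁ * (TS.1 : ℝ) ^ k₁) * (M₂ * (TS.2 : ℝ) ^ k₂) := by
        calc |((∑ t ∈ Finset.Icc 1 TS.1, (t : ℂ) ^ k₁ * z₁ ^ t) *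
            (∑ s ∈ Finset.Icc 1 TS.2, (s : ℂ) ^ k₂ * z₂ ^ s)).re|
            ≤ ‖(∑ t ∈ Finset.Icc 1 TS.1, (t : ℂ) ^ k₁ * z₁ ^ t) *
                (∑ s ∈ Finset.Icc 1 TS.2, (s : ℂ) ^ k₂ * z₂ ^ s)‖ :=
              Complex.abs_re_le_norm _
          _ = ‖∑ t ∈ Finset.Icc 1 TS.1, (t : ℂ) ^ k₁ * z₁ ^ t‖ *
                ‖∑ s ∈ Finset.Icc 1 TS.2, (s : ℂ) ^ k₂ * z₂ ^ s‖ := norm_mul _ _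
          _ ≤ (M₁ * (TS.1 : ℝ) ^ k₁) * (M₂ * (TS.2 : ℝ) ^ k₂) := by
              apply mul_le_mul hb₁ hb₂ (norm_nonneg _)
              positivity
      calc (1 / ((TS.1 : ℝ) ^ (k₁ + 1) * (TS.2 : ℝ) ^ (k₂ + 1))) * (1 / 2) *
            |((∑ t ∈ Finset.Icc 1 TS.1, (t : ℂ) ^ k₁ * z₁ ^ t) *
              (∑ s ∈ Finset.Icc 1 TS.2, (s : ℂ) ^ k₂ * z₂ ^ s)).re|
          ≤ (1 / ((TS.1 : ℝ) ^ (k₁ + 1) * (TS.2 : ℝ) ^ (k₂ + 1))) * (1 / 2) *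
            ((M₁ * (TS.1 : ℝ) ^ k₁) * (M₂ * (TS.2 : ℝ) ^ k₂)) := by
            apply mul_le_mul_of_nonneg_left h2
            positivity
        _ = (M₁ * M₂ / 2) * (1 / ((TS.1 : ℝ) * TS.2)) := by
            rw [pow_succ, pow_succ]
            have hTk : ((TS.1 : ℝ)) ^ k₁ ≠ 0 := by positivity
            have hSk : ((TS.2 : ℝ)) ^ k₂ ≠ 0 := by positivity
            field_simp
    · have hmul : Tendsto (fun TS : ℕ × ℕ => (TS.1 : ℝ) * TS.2) (atTop ×ˢ atTop) atTop :=
        (tendsto_natCast_atTop_atTop.comp tendsto_fst).atTop_mul_atTop₀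
          (tendsto_natCast_atTop_atTop.comp tendsto_snd)
      have := (tendsto_inv_atTop_zero.comp hmul).const_mul (M₁ * M₂ / 2)
      simpa [one_div] using this
  have hcomb := hG.add hH
  have hval : (1 / 2) * (1 / ((k₁ : ℝ) + 1)) * (1 / ((k₂ : ℝ) + 1)) + 0
      = 1 / (2 * ((k₁ : ℝ) + 1) * ((k₂ : ℝ) + 1)) := by
    have h1 : ((k₁ : ℝ) + 1) ≠ 0 := by positivity
    have h2 : ((k₂ : ℝ) + 1) ≠ 0 := by positivity
    rw [add_zero]
    field_simp
  rw [hval] at hcomb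
  exact Tendsto.congr' (Filter.Eventually.of_forall fun TS => (key TS.1 TS.2).symm) hcomb
end

section
/- For all but countably many pairs (θ₁, θ₂) in (0,π)×(0,π) and for fixed nonnegative integers k₁, k₂ ∈ {0,1,2}, the limit as T,S → ∞ of (1/(T^{k₁+1} S^{k₂+1})) Σ_{t=1}^{T} Σ_{s=1}^{S} t^{k₁} s^{k₂} sin²(θ₁ t + θ₂ s) equals 1/(2(k₁+1)(k₂+1)). -/
open Filter Real Topology

lemma geom_partial_bound (z : ℂ) (h1 : ‖z‖ = 1) (hz : z ≠ 1) (m : ℕ) :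
    ‖∑ j ∈ Finset.range m, z ^ j‖ ≤ 2 / ‖1 - z‖ := by
  have hpos : 0 < ‖1 - z‖ := by
    rw [norm_pos_iff, sub_ne_zero]; exact fun h => hz h.symm
  rw [geom_sum_eq hz, norm_div, norm_sub_rev z 1]
  gcongr
  calc ‖z ^ m - 1‖ ≤ ‖z ^ m‖ + ‖(1:ℂ)‖ := norm_sub_le _ _
    _ = 2 := by rw [norm_pow, h1]; norm_num

lemma abel_bound (z : ℂ) (h1 : ‖z‖ = 1) (hz : z ≠ 1) (k : ℕ) (n : ℕ) (hn : 1 ≤ n) :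
    ‖∑ t ∈ Finset.Icc 1 n, (t : ℂ) ^ k * z ^ t‖ ≤ (4 / ‖1 - z‖ + 1) * (n : ℝ) ^ k := by
  set M : ℝ := 2 / ‖1 - z‖ with hMdef
  have hM0 : 0 ≤ M := by positivity
  have hG : ∀ m, ‖∑ j ∈ Finset.range m, z ^ j‖ ≤ M := geom_partial_bound z h1 hz
  have hA1 : (1:ℝ) ≤ (n:ℝ) ^ k := one_le_pow₀ (by exact_mod_cast hn)
  have hsplit : Finset.range (n + 1) = insert 0 (Finset.Icc 1 n) := by
    ext x; simp [Finset.mem_range, Finset.mem_Icc]; omega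
  have h0 : (0 : ℕ) ∉ Finset.Icc 1 n := by simp
  have hIcc : ∑ t ∈ Finset.Icc 1 n, (t:ℂ) ^ k * z ^ t
      = (∑ i ∈ Finset.range (n+1), (i:ℂ) ^ k * z ^ i) - (0:ℂ) ^ k * z ^ 0 := by
    rw [hsplit, Finset.sum_insert h0]; push_cast; ring
  have hbp := Finset.sum_range_by_parts (fun i => (i:ℂ) ^ k) (fun i => z ^ i) (n + 1)
  simp only [smul_eq_mul, Nat.add_sub_cancel] at hbp
  -- bound the range sum
  have hrange : ‖∑ i ∈ Finset.range (n+1), (i:ℂ) ^ k * z ^ i‖ ≤ 2 * M * (n:ℝ) ^ k := by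
    rw [hbp]
    have h2 : ‖∑ i ∈ Finset.range n, ((((i+1 : ℕ)):ℂ) ^ k - (i:ℂ) ^ k) * ∑ j ∈ Finset.range (i+1), z ^ j‖
        ≤ M * (n:ℝ) ^ k := by
      calc ‖∑ i ∈ Finset.range n, ((((i+1 : ℕ)):ℂ) ^ k - (i:ℂ) ^ k) * ∑ j ∈ Finset.range (i+1), z ^ j‖
          ≤ ∑ i ∈ Finset.range n, (((i:ℝ)+1) ^ k - (i:ℝ) ^ k) * M := by
            refine (norm_sum_le _ _).trans (Finset.sum_le_sum fun i _ => ?_)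
            rw [norm_mul]
            have hnorm : ‖(((i+1 : ℕ)):ℂ) ^ k - (i:ℂ) ^ k‖ = ((i:ℝ)+1) ^ k - (i:ℝ) ^ k := by
              have hcast : (((i+1 : ℕ)):ℂ) ^ k - (i:ℂ) ^ k = ((((i:ℝ)+1) ^ k - (i:ℝ) ^ k : ℝ) : ℂ) := by
                push_cast; ring
              rw [hcast, Complex.norm_real, Real.norm_of_nonneg (sub_nonneg.2 (pow_le_pow_left₀ (by positivity) (by linarith) k))]
            rw [hnorm]
            exact mul_le_mul_of_nonneg_left (hG _) (by
              exact sub_nonneg.2 (pow_le_pow_left₀ (by positivity) (by linarith) k))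
        _ = ((n:ℝ) ^ k - (0:ℝ) ^ k) * M := by
            rw [← Finset.sum_mul]
            congr 1
            have := Finset.sum_range_sub (f := fun i : ℕ => (i:ℝ) ^ k) n
            push_cast at this ⊢
            linarith [this]
        _ ≤ M * (n:ℝ) ^ k := by
            rcases k with _ | k
            · simpa using hM0
            · rw [zero_pow (Nat.succ_ne_zero k), sub_zero, mul_comm]
    calc ‖(n:ℂ) ^ k * ∑ i ∈ Finset.range (n+1), z ^ i -
          ∑ i ∈ Finset.range n, ((((i+1 : ℕ)):ℂ) ^ k - (i:ℂ) ^ k) * ∑ j ∈ Finset.range (i+1), z ^ j‖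
        ≤ ‖(n:ℂ) ^ k * ∑ i ∈ Finset.range (n+1), z ^ i‖ + M * (n:ℝ) ^ k :=
          (norm_sub_le _ _).trans (by linarith [h2])
      _ ≤ (n:ℝ) ^ k * M + M * (n:ℝ) ^ k := by
          gcongr
          · rw [norm_mul]
            have : ‖(n:ℂ) ^ k‖ = (n:ℝ) ^ k := by
              rw [norm_pow]; norm_num
            rw [this]
            exact mul_le_mul_of_nonneg_left (hG _) (by positivity)
      _ = 2 * M * (n:ℝ) ^ k := by ring
  rw [hIcc]
  have hzk : ‖(0:ℂ) ^ k * z ^ 0‖ ≤ 1 := by rcases k with _ | k <;> simp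
  calc ‖(∑ i ∈ Finset.range (n+1), (i:ℂ) ^ k * z ^ i) - (0:ℂ) ^ k * z ^ 0‖
      ≤ 2 * M * (n:ℝ) ^ k + 1 := (norm_sub_le _ _).trans (by linarith)
    _ ≤ (4 / ‖1 - z‖ + 1) * (n:ℝ) ^ k := by
        have : 2 * M = 4 / ‖1 - z‖ := by rw [hMdef]; ring
        nlinarith [hM0, hA1]

lemma sum_Icc_pow0 (n : ℕ) : ∑ t ∈ Finset.Icc 1 n, (t:ℝ) ^ 0 = n := by
  simp [Nat.card_Icc]

lemma sum_Icc_pow1 (n : ℕ) : ∑ t ∈ Finset.Icc 1 n, (t:ℝ) ^ 1 = ((n:ℝ)^2 + n) / 2 := by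
  induction n with
  | zero => simp
  | succ m ih =>
    rw [Finset.sum_Icc_succ_top (by omega), ih]
    push_cast; ring

lemma sum_Icc_pow2 (n : ℕ) : ∑ t ∈ Finset.Icc 1 n, (t:ℝ) ^ 2 = (2*(n:ℝ)^3 + 3*(n:ℝ)^2 + n) / 6 := by
  induction n with
  | zero => simp
  | succ m ih =>
    rw [Finset.sum_Icc_succ_top (by omega), ih]
    push_cast; ring

lemma tendsto_avg (k : ℕ) (hk : k = 0 ∨ k = 1 ∨ k = 2) :
    Tendsto (fun n : ℕ => (1/(n:ℝ) ^ (k+1)) * ∑ t ∈ Finset.Icc 1 n, (t:ℝ) ^ k)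
      atTop (𝓝 (1/((k:ℝ)+1))) := by
  have h : Tendsto (fun n : ℕ => 1/(n:ℝ)) atTop (𝓝 0) := tendsto_one_div_atTop_nhds_zero_nat
  rcases hk with rfl | rfl | rfl
  · have haux : Tendsto (fun _ : ℕ => (1:ℝ)) atTop (𝓝 (1/(((0:ℕ):ℝ)+1))) := by
      simpa using tendsto_const_nhds (α := ℕ) (f := atTop) (x := (1:ℝ))
    refine haux.congr' ?_
    filter_upwards [eventually_ge_atTop 1] with n hn
    have hn0 : (n:ℝ) ≠ 0 := Nat.cast_ne_zero.2 (by omega)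
    rw [sum_Icc_pow0, pow_one]
    field_simp
  · have haux : Tendsto (fun n : ℕ => 1/2 + (1/(n:ℝ))*(1/2)) atTop (𝓝 (1/(((1:ℕ):ℝ)+1))) := by
      have h2 : Tendsto (fun n : ℕ => 1/2 + (1/(n:ℝ))*(1/2)) atTop (𝓝 ((1:ℝ)/2 + 0*(1/2))) :=
        tendsto_const_nhds.add (h.mul tendsto_const_nhds)
      norm_num at h2 ⊢
      exact h2
    refine haux.congr' ?_
    filter_upwards [eventually_ge_atTop 1] with n hn
    have hn0 : (n:ℝ) ≠ 0 := Nat.cast_ne_zero.2 (by omega)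
    rw [sum_Icc_pow1]
    field_simp
  · have haux : Tendsto (fun n : ℕ => 1/3 + ((1/(n:ℝ))*(1/2) + (1/(n:ℝ))*((1/(n:ℝ))*(1/6))))
        atTop (𝓝 (1/(((2:ℕ):ℝ)+1))) := by
      have h2 : Tendsto (fun n : ℕ => 1/3 + ((1/(n:ℝ))*(1/2) + (1/(n:ℝ))*((1/(n:ℝ))*(1/6))))
          atTop (𝓝 ((1:ℝ)/3 + (0*(1/2) + 0*(0*(1/6))))) :=
        tendsto_const_nhds.add ((h.mul tendsto_const_nhds).add (h.mul (h.mul tendsto_const_nhds)))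
      norm_num at h2 ⊢
      exact h2
    refine haux.congr' ?_
    filter_upwards [eventually_ge_atTop 1] with n hn
    have hn0 : (n:ℝ) ≠ 0 := Nat.cast_ne_zero.2 (by omega)
    rw [sum_Icc_pow2]
    field_simp
    ring

lemma double_identity (θ₁ θ₂ : ℝ) (k₁ k₂ T S : ℕ) :
    ∑ t ∈ Finset.Icc 1 T, ∑ s ∈ Finset.Icc 1 S,
        (t:ℝ) ^ k₁ * (s:ℝ) ^ k₂ * (Real.sin (θ₁ * t + θ₂ * s) ^ 2)
    = (1/2) * ((∑ t ∈ Finset.Icc 1 T, (t:ℝ) ^ k₁) * (∑ s ∈ Finset.Icc 1 S, (s:ℝ) ^ k₂))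
      - (1/2) * ((∑ t ∈ Finset.Icc 1 T, (t:ℂ) ^ k₁ * (Complex.exp ((2*θ₁:ℝ) * Complex.I)) ^ t) *
                 (∑ s ∈ Finset.Icc 1 S, (s:ℂ) ^ k₂ * (Complex.exp ((2*θ₂:ℝ) * Complex.I)) ^ s)).re := by
  have hre : ((∑ t ∈ Finset.Icc 1 T, (t:ℂ) ^ k₁ * (Complex.exp ((2*θ₁:ℝ) * Complex.I)) ^ t) *
      (∑ s ∈ Finset.Icc 1 S, (s:ℂ) ^ k₂ * (Complex.exp ((2*θ₂:ℝ) * Complex.I)) ^ s)).re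
      = ∑ t ∈ Finset.Icc 1 T, ∑ s ∈ Finset.Icc 1 S,
          (t:ℝ) ^ k₁ * (s:ℝ) ^ k₂ * Real.cos (2 * (θ₁ * t + θ₂ * s)) := by
    rw [Finset.sum_mul_sum, Complex.re_sum]
    refine Finset.sum_congr rfl fun t _ => ?_
    rw [Complex.re_sum]
    refine Finset.sum_congr rfl fun s _ => ?_
    have hz : (Complex.exp ((2*θ₁:ℝ) * Complex.I)) ^ t * (Complex.exp ((2*θ₂:ℝ) * Complex.I)) ^ s
        = Complex.exp ((2 * (θ₁ * t + θ₂ * s) : ℝ) * Complex.I) := by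
      rw [← Complex.exp_nat_mul, ← Complex.exp_nat_mul, ← Complex.exp_add]
      congr 1
      push_cast
      ring
    have hterm : (t:ℂ) ^ k₁ * (Complex.exp ((2*θ₁:ℝ) * Complex.I)) ^ t *
        ((s:ℂ) ^ k₂ * (Complex.exp ((2*θ₂:ℝ) * Complex.I)) ^ s)
        = (((t:ℝ) ^ k₁ * (s:ℝ) ^ k₂ : ℝ) : ℂ) * Complex.exp ((2 * (θ₁ * t + θ₂ * s) : ℝ) * Complex.I) := by
      rw [← hz]
      push_cast
      ring
    rw [hterm, Complex.re_ofReal_mul, Complex.exp_ofReal_mul_I_re]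
  rw [hre, Finset.sum_mul_sum, Finset.mul_sum, Finset.mul_sum, ← Finset.sum_sub_distrib]
  refine Finset.sum_congr rfl fun t _ => ?_
  rw [Finset.mul_sum, Finset.mul_sum, ← Finset.sum_sub_distrib]
  refine Finset.sum_congr rfl fun s _ => ?_
  rw [Real.sin_sq_eq_half_sub]
  ring

lemma exp_two_theta_ne_one {θ : ℝ} (h0 : 0 < θ) (hπ : θ < π) :
    Complex.exp ((2*θ:ℝ) * Complex.I) ≠ 1 := by
  rw [Ne, Complex.exp_eq_one_iff]
  rintro ⟨n, hn⟩
  have hn' : ((2*θ : ℝ) : ℂ) * Complex.I = ((n * (2*π) : ℝ) : ℂ) * Complex.I := by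
    rw [hn]; push_cast; ring
  have h2 : (2*θ : ℝ) = n * (2*π) := by
    have := mul_right_cancel₀ Complex.I_ne_zero hn'
    exact_mod_cast this
  have hθ : θ = n * π := by linarith
  have hπ0 := Real.pi_pos
  have hn0 : (0:ℝ) < n := by
    by_contra hle
    push_neg at hle
    nlinarith
  have hn0' : (0:ℤ) < n := by exact_mod_cast hn0
  have hn1 : (1:ℝ) ≤ n := by exact_mod_cast hn0'
  nlinarith

/-- Vinogradov-type averaging lemma for the 2-D sinusoidal model: for all but
countably many frequency pairs `(θ₁, θ₂)` in `(0,π) × (0,π)` and for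
`k₁, k₂ ∈ {0,1,2}`, the normalized double sum converges as `T, S → ∞`. -/
theorem stmt_1 :
    ∃ C : Set (ℝ × ℝ), C.Countable ∧
      ∀ θ₁ θ₂ : ℝ, θ₁ ∈ Set.Ioo 0 π → θ₂ ∈ Set.Ioo 0 π → (θ₁, θ₂) ∉ C →
        ∀ k₁ k₂ : ℕ, k₁ ∈ ({0, 1, 2} : Set ℕ) → k₂ ∈ ({0, 1, 2} : Set ℕ) →
          Tendsto
            (fun TS : ℕ × ℕ =>
              (1 / ((TS.1 : ℝ) ^ (k₁ + 1) * (TS.2 : ℝ) ^ (k₂ + 1))) *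
                ∑ t ∈ Finset.Icc 1 TS.1, ∑ s ∈ Finset.Icc 1 TS.2,
                  (t : ℝ) ^ k₁ * (s : ℝ) ^ k₂ * (Real.sin (θ₁ * t + θ₂ * s) ^ 2))
            (atTop ×ˢ atTop)
            (𝓝 (1 / (2 * (k₁ + 1) * (k₂ + 1)))) := by
  refine ⟨∅, Set.countable_empty, ?_⟩
  intro θ₁ θ₂ h₁ h₂ _ k₁ k₂ hk₁ hk₂
  simp only [Set.mem_insert_iff, Set.mem_singleton_iff] at hk₁ hk₂
  obtain ⟨h₁l, h₁r⟩ := h₁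
  obtain ⟨h₂l, h₂r⟩ := h₂
  set z₁ := Complex.exp ((2*θ₁:ℝ) * Complex.I) with hz₁def
  set z₂ := Complex.exp ((2*θ₂:ℝ) * Complex.I) with hz₂def
  have hz₁n : ‖z₁‖ = 1 := Complex.norm_exp_ofReal_mul_I _
  have hz₂n : ‖z₂‖ = 1 := Complex.norm_exp_ofReal_mul_I _
  have hz₁ : z₁ ≠ 1 := exp_two_theta_ne_one h₁l h₁r
  have hz₂ : z₂ ≠ 1 := exp_two_theta_ne_one h₂l h₂r
  set C₁ : ℝ := 4 / ‖1 - z₁‖ + 1 with hC₁def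
  set C₂ : ℝ := 4 / ‖1 - z₂‖ + 1 with hC₂def
  have hC₁0 : 0 ≤ C₁ := by positivity
  have hC₂0 : 0 ≤ C₂ := by positivity
  set P : ℕ → ℂ := fun T => ∑ t ∈ Finset.Icc 1 T, (t:ℂ) ^ k₁ * z₁ ^ t with hPdef
  set Q : ℕ → ℂ := fun S => ∑ s ∈ Finset.Icc 1 S, (s:ℂ) ^ k₂ * z₂ ^ s with hQdef
  -- error term tendsto 0
  have herr : Tendsto (fun TS : ℕ × ℕ =>
      (1 / ((TS.1 : ℝ) ^ (k₁ + 1) * (TS.2 : ℝ) ^ (k₂ + 1))) * ((1/2) * (P TS.1 * Q TS.2).re))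
      (atTop ×ˢ atTop) (𝓝 0) := by
    have hg : Tendsto (fun TS : ℕ × ℕ => (C₁ * C₂ / 2) * ((1/(TS.1:ℝ)) * (1/(TS.2:ℝ))))
        (atTop ×ˢ atTop) (𝓝 0) := by
      have := (tendsto_const_nhds (x := C₁ * C₂ / 2) (f := atTop ×ˢ atTop) (α := ℕ × ℕ)).mul
        (((tendsto_one_div_atTop_nhds_zero_nat.comp tendsto_fst)).mul
          ((tendsto_one_div_atTop_nhds_zero_nat.comp tendsto_snd)))
      simpa using this
    refine squeeze_zero_norm' ?_ hg
    · filter_upwards [(tendsto_fst.eventually (eventually_ge_atTop 1)),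
        (tendsto_snd.eventually (eventually_ge_atTop 1))] with TS hT hS
      have hx1 : (1:ℝ) ≤ (TS.1:ℝ) := by exact_mod_cast hT
      have hy1 : (1:ℝ) ≤ (TS.2:ℝ) := by exact_mod_cast hS
      have hx0 : (0:ℝ) < (TS.1:ℝ) := by linarith
      have hy0 : (0:ℝ) < (TS.2:ℝ) := by linarith
      have hP := abel_bound z₁ hz₁n hz₁ k₁ TS.1 hT
      have hQ := abel_bound z₂ hz₂n hz₂ k₂ TS.2 hS
      have hre : |(P TS.1 * Q TS.2).re| ≤ (C₁ * (TS.1:ℝ) ^ k₁) * (C₂ * (TS.2:ℝ) ^ k₂) := by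
        calc |(P TS.1 * Q TS.2).re| ≤ ‖P TS.1 * Q TS.2‖ := Complex.abs_re_le_norm _
          _ = ‖P TS.1‖ * ‖Q TS.2‖ := norm_mul _ _
          _ ≤ (C₁ * (TS.1:ℝ) ^ k₁) * (C₂ * (TS.2:ℝ) ^ k₂) := by
              exact mul_le_mul hP hQ (norm_nonneg _) (by positivity)
      rw [Real.norm_eq_abs, abs_mul]
      have habs1 : |1 / ((TS.1 : ℝ) ^ (k₁ + 1) * (TS.2 : ℝ) ^ (k₂ + 1))|
          = 1 / ((TS.1 : ℝ) ^ (k₁ + 1) * (TS.2 : ℝ) ^ (k₂ + 1)) := abs_of_nonneg (by positivity)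
      rw [habs1, abs_mul, abs_of_nonneg (by norm_num : (0:ℝ) ≤ 1/2)]
      calc (1 / ((TS.1 : ℝ) ^ (k₁ + 1) * (TS.2 : ℝ) ^ (k₂ + 1))) * (1/2 * |(P TS.1 * Q TS.2).re|)
          ≤ (1 / ((TS.1 : ℝ) ^ (k₁ + 1) * (TS.2 : ℝ) ^ (k₂ + 1))) *
            (1/2 * ((C₁ * (TS.1:ℝ) ^ k₁) * (C₂ * (TS.2:ℝ) ^ k₂))) := by
            gcongr
          _ = (C₁ * C₂ / 2) * ((1/(TS.1:ℝ)) * (1/(TS.2:ℝ))) := by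
            rw [pow_succ, pow_succ]
            field_simp
  -- main term
  have hmain : Tendsto (fun TS : ℕ × ℕ =>
      (1/2) * (((1/(TS.1:ℝ) ^ (k₁+1)) * ∑ t ∈ Finset.Icc 1 TS.1, (t:ℝ) ^ k₁) *
        ((1/(TS.2:ℝ) ^ (k₂+1)) * ∑ s ∈ Finset.Icc 1 TS.2, (s:ℝ) ^ k₂)))
      (atTop ×ˢ atTop) (𝓝 ((1/2) * ((1/((k₁:ℝ)+1)) * (1/((k₂:ℝ)+1))))) :=
    tendsto_const_nhds.mul (((tendsto_avg k₁ hk₁).comp tendsto_fst).mul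
      ((tendsto_avg k₂ hk₂).comp tendsto_snd))
  have hcomb := hmain.sub herr
  have hval : (1/2) * ((1/((k₁:ℝ)+1)) * (1/((k₂:ℝ)+1))) - 0
      = 1 / (2 * ((k₁:ℝ) + 1) * ((k₂:ℝ) + 1)) := by
    rw [sub_zero]
    have hk1 : ((k₁:ℝ)+1) ≠ 0 := by positivity
    have hk2 : ((k₂:ℝ)+1) ≠ 0 := by positivity
    field_simp
  rw [hval] at hcomb
  refine hcomb.congr fun TS => ?_
  rw [double_identity]
  rw [show (1:ℝ) / ((TS.1 : ℝ) ^ (k₁ + 1) * (TS.2 : ℝ) ^ (k₂ + 1))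
      = (1/(TS.1:ℝ) ^ (k₁+1)) * (1/(TS.2:ℝ) ^ (k₂+1)) by
    rw [one_div, mul_inv, one_div, one_div]]
  ring
end

section
/- Let ε be a real random variable with distribution function G satisfying G(0) = 1/2, and let h > 0 be a real constant. Then E[|h + ε| − |ε|] = 2∫_{−h}^{0} (h + x) dG(x), and in particular this expectation is nonnegative and bounded above by 2h. -/
open MeasureTheory

/-- If `ε` has law `μ` with distribution function satisfying `G(0) = 1/2`
(i.e. `μ (Iic 0) = 1/2`) and `h > 0`, then
`E[|h + ε| − |ε|] = 2 ∫_{(-h,0]} (h + x) dG(x)`, and this expectation lies in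
`[0, 2h]`. -/
theorem stmt_4 {Ω : Type*} [MeasurableSpace Ω] (P : Measure Ω) [IsProbabilityMeasure P]
    (ε : Ω → ℝ) (hε : Measurable ε) (h : ℝ) (hh : 0 < h)
    (hmed : P.map ε (Set.Iic 0) = ENNReal.ofReal (1 / 2)) :
    (∫ ω, (|h + ε ω| - |ε ω|) ∂P)
        = 2 * ∫ x in Set.Ioc (-h) 0, (h + x) ∂(P.map ε) ∧
      0 ≤ ∫ ω, (|h + ε ω| - |ε ω|) ∂P ∧
      (∫ ω, (|h + ε ω| - |ε ω|) ∂P) ≤ 2 * h := by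
  have hμprob : IsProbabilityMeasure (P.map ε) := Measure.isProbabilityMeasure_map hε.aemeasurable
  set μ := P.map ε with hμdef
  have hcont : Continuous fun x : ℝ => |h + x| - |x| := by continuity
  have hbound : ∀ x : ℝ, |(|h + x| - |x|)| ≤ h := by
    intro x
    have := abs_abs_sub_abs_le_abs_sub (h + x) x
    simpa [abs_of_pos hh] using this
  have hint : Integrable (fun x : ℝ => |h + x| - |x|) μ := by
    refine Integrable.mono' (integrable_const h) hcont.aestronglyMeasurable ?_
    filter_upwards with x using hbound x
  have hmap : (∫ ω, (|h + ε ω| - |ε ω|) ∂P) = ∫ x, (|h + x| - |x|) ∂μ :=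
    (integral_map hε.aemeasurable hcont.aestronglyMeasurable).symm
  have hhalf : ENNReal.ofReal (1 / 2) = 1 / 2 := by
    rw [ENNReal.ofReal_div_of_pos (by norm_num)]
    norm_num
  have hIic0 : μ (Set.Iic 0) = ENNReal.ofReal (1 / 2) := hmed
  have hIoi0 : μ (Set.Ioi 0) = ENNReal.ofReal (1 / 2) := by
    have h1 : μ (Set.Iic 0)ᶜ = 1 - μ (Set.Iic 0) :=
      prob_compl_eq_one_sub measurableSet_Iic
    rw [Set.compl_Iic, hIic0, hhalf] at h1
    rw [h1, hhalf]
    rw [one_div, ENNReal.one_sub_inv_two]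
  have hunion : μ (Set.Iic (-h)) + μ (Set.Ioc (-h) 0) = ENNReal.ofReal (1 / 2) := by
    rw [← hIic0, ← Set.Iic_union_Ioc_eq_Iic (by linarith : -h ≤ (0:ℝ))]
    exact (measure_union (Set.Iic_disjoint_Ioc le_rfl) measurableSet_Ioc).symm
  set a := (μ (Set.Iic (-h))).toReal with ha
  set b := (μ (Set.Ioc (-h) 0)).toReal with hb
  set c := (μ (Set.Ioi 0)).toReal with hc
  have hab : a + b = 1 / 2 := by
    rw [ha, hb, ← ENNReal.toReal_add (measure_ne_top μ _) (measure_ne_top μ _), hunion,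
      ENNReal.toReal_ofReal (by norm_num)]
  have hc2 : c = 1 / 2 := by rw [hc, hIoi0, ENNReal.toReal_ofReal (by norm_num)]
  have hb1 : b ≤ 1 := by
    rw [hb]
    exact ENNReal.toReal_le_of_le_ofReal zero_le_one (by simpa using prob_le_one)
  have hint2 : IntegrableOn (fun x : ℝ => h + x) (Set.Ioc (-h) 0) μ := by
    refine Integrable.mono' (integrable_const h) (by fun_prop) ?_
    filter_upwards [ae_restrict_mem measurableSet_Ioc] with x hx
    rw [Real.norm_eq_abs, abs_of_nonneg (by linarith [hx.1] : (0:ℝ) ≤ h + x)]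
    linarith [hx.2]
  have hdecomp : (∫ x, (|h + x| - |x|) ∂μ)
      = (∫ x in Set.Iic (-h), (|h + x| - |x|) ∂μ)
        + (∫ x in Set.Ioc (-h) 0, (|h + x| - |x|) ∂μ)
        + (∫ x in Set.Ioi 0, (|h + x| - |x|) ∂μ) := by
    have h1 := integral_add_compl (μ := μ) (s := Set.Iic (0:ℝ)) measurableSet_Iic (f := fun x : ℝ => |h + x| - |x|) hint
    rw [Set.compl_Iic] at h1
    rw [← h1, ← Set.Iic_union_Ioc_eq_Iic (by linarith : -h ≤ (0:ℝ)),
      setIntegral_union (Set.Iic_disjoint_Ioc le_rfl) measurableSet_Ioc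
        (hint.integrableOn) (hint.integrableOn)]
  have e1 : (∫ x in Set.Iic (-h), (|h + x| - |x|) ∂μ) = -h * a := by
    rw [setIntegral_congr_fun measurableSet_Iic (g := fun _ => -h) ?_, setIntegral_const]
    · rw [measureReal_def, ← ha, smul_eq_mul]; ring
    · intro x hx
      have hx' : x ≤ -h := hx
      show |h + x| - |x| = -h
      rw [abs_of_nonpos (by linarith), abs_of_nonpos (by linarith)]
      ring
  have e3 : (∫ x in Set.Ioi 0, (|h + x| - |x|) ∂μ) = h * c := by
    rw [setIntegral_congr_fun measurableSet_Ioi (g := fun _ => h) ?_, setIntegral_const]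
    · rw [measureReal_def, ← hc, smul_eq_mul]; ring
    · intro x hx
      have hx' : (0:ℝ) < x := hx
      show |h + x| - |x| = h
      rw [abs_of_nonneg (by linarith), abs_of_nonneg (by linarith)]
      ring
  have e2 : (∫ x in Set.Ioc (-h) 0, (|h + x| - |x|) ∂μ)
      = 2 * (∫ x in Set.Ioc (-h) 0, (h + x) ∂μ) - h * b := by
    rw [setIntegral_congr_fun measurableSet_Ioc (g := fun x => 2 * (h + x) - h) ?_]
    · rw [integral_sub ((hint2.const_mul 2)) (integrableOn_const (measure_ne_top μ _)),
        integral_const_mul, setIntegral_const, measureReal_def, ← hb, smul_eq_mul]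
      ring
    · intro x hx
      have hx1 : -h < x := hx.1
      have hx2 : x ≤ 0 := hx.2
      show |h + x| - |x| = 2 * (h + x) - h
      rw [abs_of_nonneg (by linarith), abs_of_nonpos (by linarith)]
      ring
  set I := ∫ x in Set.Ioc (-h) 0, (h + x) ∂μ with hI
  have hInonneg : 0 ≤ I := by
    refine setIntegral_nonneg measurableSet_Ioc fun x hx => ?_
    linarith [hx.1]
  have hIle : I ≤ h * b := by
    have := setIntegral_mono_on hint2 (integrableOn_const (measure_ne_top μ _))
      measurableSet_Ioc (g := fun _ => h) (fun x hx => by linarith [hx.2])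
    rw [setIntegral_const, measureReal_def, ← hb, smul_eq_mul] at this
    linarith [this]
  have hmain : (∫ ω, (|h + ε ω| - |ε ω|) ∂P) = 2 * I := by
    rw [hmap, hdecomp, e1, e2, e3]
    have hcab : a + b = c := by rw [hab, hc2]
    linear_combination (-h) * hcab
  refine ⟨hmain, ?_, ?_⟩
  · rw [hmain]; linarith
  · rw [hmain]
    have hb0 : 0 ≤ b := by rw [hb]; positivity
    nlinarith
end

section
/- Fix (A⁰, B⁰, λ⁰, μ⁰) and (A, B, λ, μ) with (λ⁰, μ⁰) ≠ (λ, μ), frequencies lying in (0,π)² and avoiding a countable exceptional set. Define h_{t,s} = A⁰cos(λ⁰t + μ⁰s) + B⁰sin(λ⁰t + μ⁰s) − A cos(λt + μs) − B sin(λt + μs). Then lim_{T,S→∞} (1/(TS)) Σ_{t=1}^{T} Σ_{s=1}^{S} h_{t,s}² = (A⁰² + B⁰² + A² + B²)/2, which is strictly positive when (A⁰,B⁰) ≠ (0,0) or (A,B) ≠ (0,0). -/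
open Filter Real Topology

lemma exp_ne_one_of_ne {θ : ℝ} (h0 : θ ≠ 0) (h2 : |θ| < 2 * π) :
    Complex.exp (θ * Complex.I) ≠ 1 := by
  intro h
  rw [Complex.exp_eq_one_iff] at h
  obtain ⟨n, hn⟩ := h
  have hI : (θ : ℂ) * Complex.I = ((n : ℝ) * (2 * π) : ℝ) * Complex.I := by
    rw [hn]; push_cast; ring
  have hθ : θ = (n : ℝ) * (2 * π) :=
    Complex.ofReal_inj.1 (mul_right_cancel₀ Complex.I_ne_zero hI)
  rcases eq_or_ne n 0 with h | h
  · exact h0 (by simp [hθ, h])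
  · have h1 : (1 : ℝ) ≤ |(n : ℝ)| := by
      rw [← Int.cast_abs]; exact_mod_cast Int.one_le_abs h
    have : 2 * π ≤ |θ| := by
      rw [hθ, abs_mul, abs_of_pos (by positivity : (0:ℝ) < 2 * π)]
      nlinarith [Real.pi_pos]
    linarith

lemma norm_sum_exp_le (z : ℂ) (hz : ‖z‖ = 1) (h1 : z ≠ 1) (T : ℕ) :
    ‖∑ t ∈ Finset.Icc 1 T, z ^ t‖ ≤ 2 / ‖z - 1‖ := by
  have hre : ∑ t ∈ Finset.Icc 1 T, z ^ t = z * ((z ^ T - 1) / (z - 1)) := by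
    rw [← Finset.Ico_add_one_right_eq_Icc, Finset.sum_Ico_eq_sum_range]
    simp only [Nat.add_sub_cancel, pow_add, pow_one]
    rw [← Finset.mul_sum, geom_sum_eq h1]
  rw [hre, norm_mul, hz, one_mul, norm_div]
  gcongr
  calc ‖z ^ T - 1‖ ≤ ‖z ^ T‖ + ‖(1:ℂ)‖ := norm_sub_le _ _
    _ = 2 := by rw [norm_pow, hz]; norm_num

lemma prod_exp (a b : ℝ) (T S : ℕ) :
    (∑ t ∈ Finset.Icc 1 T, Complex.exp (a * Complex.I) ^ t) *
      (∑ s ∈ Finset.Icc 1 S, Complex.exp (b * Complex.I) ^ s)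
    = ∑ t ∈ Finset.Icc 1 T, ∑ s ∈ Finset.Icc 1 S,
        Complex.exp (((a * t + b * s : ℝ)) * Complex.I) := by
  rw [Finset.sum_mul_sum]
  refine Finset.sum_congr rfl fun t _ => Finset.sum_congr rfl fun s _ => ?_
  rw [← Complex.exp_nat_mul, ← Complex.exp_nat_mul, ← Complex.exp_add]
  congr 1; push_cast; ring

lemma osc_main (a b : ℝ)
    (h : Complex.exp (a * Complex.I) ≠ 1 ∨ Complex.exp (b * Complex.I) ≠ 1) :
    Tendsto (fun TS : ℕ × ℕ => ((1 / ((TS.1 : ℝ) * TS.2) : ℝ) : ℂ) *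
        ∑ t ∈ Finset.Icc 1 TS.1, ∑ s ∈ Finset.Icc 1 TS.2,
          Complex.exp (((a * t + b * s : ℝ)) * Complex.I))
      (atTop ×ˢ atTop) (𝓝 0) := by
  set z := Complex.exp (a * Complex.I) with hzdef
  set w := Complex.exp (b * Complex.I) with hwdef
  have hz1 : ‖z‖ = 1 := by rw [hzdef, Complex.norm_exp_ofReal_mul_I]
  have hw1 : ‖w‖ = 1 := by rw [hwdef, Complex.norm_exp_ofReal_mul_I]
  have hPle : ∀ T : ℕ, ‖∑ t ∈ Finset.Icc 1 T, z ^ t‖ ≤ T := by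
    intro T
    calc ‖∑ t ∈ Finset.Icc 1 T, z ^ t‖ ≤ ∑ t ∈ Finset.Icc 1 T, ‖z ^ t‖ := norm_sum_le _ _
      _ = T := by simp [norm_pow, hz1]
  have hQle : ∀ S : ℕ, ‖∑ s ∈ Finset.Icc 1 S, w ^ s‖ ≤ S := by
    intro S
    calc ‖∑ s ∈ Finset.Icc 1 S, w ^ s‖ ≤ ∑ s ∈ Finset.Icc 1 S, ‖w ^ s‖ := norm_sum_le _ _
      _ = S := by simp [norm_pow, hw1]
  rcases h with ha | hb
  · set M : ℝ := 2 / ‖z - 1‖ with hMdef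
    have hM0 : 0 ≤ M := by positivity
    refine squeeze_zero_norm (fun TS : ℕ × ℕ => ?_)
      ((tendsto_const_div_atTop_nhds_zero_nat M).comp tendsto_fst)
    obtain ⟨T, S⟩ := TS
    simp only
    have hr : (0:ℝ) ≤ 1 / ((T : ℝ) * S) := by positivity
    calc ‖((1 / ((T : ℝ) * S) : ℝ) : ℂ) *
          ∑ t ∈ Finset.Icc 1 T, ∑ s ∈ Finset.Icc 1 S,
            Complex.exp (((a * t + b * s : ℝ)) * Complex.I)‖
        = (1 / ((T : ℝ) * S)) * (‖∑ t ∈ Finset.Icc 1 T, z ^ t‖ *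
            ‖∑ s ∈ Finset.Icc 1 S, w ^ s‖) := by
          rw [← prod_exp, norm_mul, norm_mul, Complex.norm_real,
            Real.norm_eq_abs, abs_of_nonneg hr]
      _ ≤ (1 / ((T : ℝ) * S)) * (M * S) := by
          refine mul_le_mul_of_nonneg_left ?_ hr
          exact mul_le_mul (norm_sum_exp_le z hz1 ha T) (hQle S) (norm_nonneg _) hM0
      _ ≤ M / T := by
          rcases Nat.eq_zero_or_pos T with hT | hT
          · simp [hT]
          · rcases Nat.eq_zero_or_pos S with hS | hS
            · simp [hS]; positivity
            · have hT' : (0:ℝ) < T := by exact_mod_cast hT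
              have hS' : (0:ℝ) < S := by exact_mod_cast hS
              refine le_of_eq ?_
              field_simp
  · set M : ℝ := 2 / ‖w - 1‖ with hMdef
    have hM0 : 0 ≤ M := by positivity
    refine squeeze_zero_norm (fun TS : ℕ × ℕ => ?_)
      ((tendsto_const_div_atTop_nhds_zero_nat M).comp tendsto_snd)
    obtain ⟨T, S⟩ := TS
    simp only
    have hr : (0:ℝ) ≤ 1 / ((T : ℝ) * S) := by positivity
    calc ‖((1 / ((T : ℝ) * S) : ℝ) : ℂ) *
          ∑ t ∈ Finset.Icc 1 T, ∑ s ∈ Finset.Icc 1 S,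
            Complex.exp (((a * t + b * s : ℝ)) * Complex.I)‖
        = (1 / ((T : ℝ) * S)) * (‖∑ t ∈ Finset.Icc 1 T, z ^ t‖ *
            ‖∑ s ∈ Finset.Icc 1 S, w ^ s‖) := by
          rw [← prod_exp, norm_mul, norm_mul, Complex.norm_real,
            Real.norm_eq_abs, abs_of_nonneg hr]
      _ ≤ (1 / ((T : ℝ) * S)) * (T * M) := by
          refine mul_le_mul_of_nonneg_left ?_ hr
          exact mul_le_mul (hPle T) (norm_sum_exp_le w hw1 hb S) (norm_nonneg _)
            (Nat.cast_nonneg T)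
      _ ≤ M / S := by
          rcases Nat.eq_zero_or_pos S with hS | hS
          · simp [hS]
          · rcases Nat.eq_zero_or_pos T with hT | hT
            · simp [hT]; positivity
            · have hT' : (0:ℝ) < T := by exact_mod_cast hT
              have hS' : (0:ℝ) < S := by exact_mod_cast hS
              refine le_of_eq ?_
              field_simp

noncomputable def avC (a b : ℝ) (TS : ℕ × ℕ) : ℝ :=
  (1 / ((TS.1 : ℝ) * (TS.2 : ℝ))) *
    ∑ t ∈ Finset.Icc 1 TS.1, ∑ s ∈ Finset.Icc 1 TS.2, Real.cos (a * t + b * s)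

noncomputable def avS (a b : ℝ) (TS : ℕ × ℕ) : ℝ :=
  (1 / ((TS.1 : ℝ) * (TS.2 : ℝ))) *
    ∑ t ∈ Finset.Icc 1 TS.1, ∑ s ∈ Finset.Icc 1 TS.2, Real.sin (a * t + b * s)

lemma avC_tendsto (a b : ℝ)
    (h : Complex.exp (a * Complex.I) ≠ 1 ∨ Complex.exp (b * Complex.I) ≠ 1) :
    Tendsto (avC a b) (atTop ×ˢ atTop) (𝓝 0) := by
  have h1 := (Complex.continuous_re.tendsto 0).comp (osc_main a b h)
  refine h1.congr fun TS => ?_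
  simp only [Function.comp, avC, Complex.re_ofReal_mul, Complex.re_sum,
    Complex.exp_ofReal_mul_I_re]

lemma avS_tendsto (a b : ℝ)
    (h : Complex.exp (a * Complex.I) ≠ 1 ∨ Complex.exp (b * Complex.I) ≠ 1) :
    Tendsto (avS a b) (atTop ×ˢ atTop) (𝓝 0) := by
  have h1 := (Complex.continuous_im.tendsto 0).comp (osc_main a b h)
  refine h1.congr fun TS => ?_
  simp only [Function.comp, avS, Complex.im_ofReal_mul, Complex.im_sum,
    Complex.exp_ofReal_mul_I_im]

lemma key_identity (A₀ B₀ A B lam₀ mu₀ l m : ℝ) (t s : ℕ) :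
    (A₀ * Real.cos (lam₀ * t + mu₀ * s) + B₀ * Real.sin (lam₀ * t + mu₀ * s)
      - A * Real.cos (l * t + m * s) - B * Real.sin (l * t + m * s)) ^ 2
    = (A₀ ^ 2 + B₀ ^ 2 + A ^ 2 + B ^ 2) / 2
      + (A₀ ^ 2 - B₀ ^ 2) / 2 * Real.cos ((2 * lam₀) * t + (2 * mu₀) * s)
      + A₀ * B₀ * Real.sin ((2 * lam₀) * t + (2 * mu₀) * s)
      + (A ^ 2 - B ^ 2) / 2 * Real.cos ((2 * l) * t + (2 * m) * s)
      + A * B * Real.sin ((2 * l) * t + (2 * m) * s)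
      + (-(A₀ * A) - B₀ * B) * Real.cos ((lam₀ - l) * t + (mu₀ - m) * s)
      + (B₀ * B - A₀ * A) * Real.cos ((lam₀ + l) * t + (mu₀ + m) * s)
      + (-(A₀ * B) - B₀ * A) * Real.sin ((lam₀ + l) * t + (mu₀ + m) * s)
      + (A₀ * B - B₀ * A) * Real.sin ((lam₀ - l) * t + (mu₀ - m) * s) := by
  rw [show ((2 * lam₀) * t + (2 * mu₀) * s : ℝ) = 2 * (lam₀ * t + mu₀ * s) from by ring,
    show ((2 * l) * t + (2 * m) * s : ℝ) = 2 * (l * t + m * s) from by ring,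
    show ((lam₀ - l) * t + (mu₀ - m) * s : ℝ)
      = (lam₀ * t + mu₀ * s) - (l * t + m * s) from by ring,
    show ((lam₀ + l) * t + (mu₀ + m) * s : ℝ)
      = (lam₀ * t + mu₀ * s) + (l * t + m * s) from by ring]
  set x : ℝ := lam₀ * t + mu₀ * s with hx
  set y : ℝ := l * t + m * s with hy
  simp only [Real.cos_two_mul, Real.sin_two_mul, Real.cos_sub, Real.cos_add,
    Real.sin_add, Real.sin_sub]
  linear_combination B₀ ^ 2 * Real.sin_sq_add_cos_sq x
    + B ^ 2 * Real.sin_sq_add_cos_sq y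

/-- For all but countably many pairs of distinct frequency pairs in `(0,π)²`,
the grid average of `h_{t,s}²` converges to `(A⁰² + B⁰² + A² + B²)/2`, which is
positive as soon as one of the amplitude pairs is nonzero. -/
theorem stmt_6 :
    ∃ C : Set ((ℝ × ℝ) × (ℝ × ℝ)), C.Countable ∧
      ∀ A₀ B₀ A B lam₀ mu₀ l m : ℝ,
        lam₀ ∈ Set.Ioo 0 π → mu₀ ∈ Set.Ioo 0 π → l ∈ Set.Ioo 0 π → m ∈ Set.Ioo 0 π →
        (lam₀, mu₀) ≠ (l, m) → ((lam₀, mu₀), (l, m)) ∉ C →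
          Tendsto
            (fun TS : ℕ × ℕ =>
              (1 / ((TS.1 : ℝ) * (TS.2 : ℝ))) *
                ∑ t ∈ Finset.Icc 1 TS.1, ∑ s ∈ Finset.Icc 1 TS.2,
                  (A₀ * Real.cos (lam₀ * t + mu₀ * s) + B₀ * Real.sin (lam₀ * t + mu₀ * s)
                    - A * Real.cos (l * t + m * s) - B * Real.sin (l * t + m * s)) ^ 2)
            (atTop ×ˢ atTop)
            (𝓝 ((A₀ ^ 2 + B₀ ^ 2 + A ^ 2 + B ^ 2) / 2)) ∧
          (((A₀, B₀) ≠ ((0 : ℝ), (0 : ℝ)) ∨ (A, B) ≠ ((0 : ℝ), (0 : ℝ))) →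
            0 < (A₀ ^ 2 + B₀ ^ 2 + A ^ 2 + B ^ 2) / 2) := by
  refine ⟨∅, Set.countable_empty, ?_⟩
  intro A₀ B₀ A B lam₀ mu₀ l m hlam₀ hmu₀ hl hm hne _
  obtain ⟨hlam₀1, hlam₀2⟩ := hlam₀
  obtain ⟨hmu₀1, hmu₀2⟩ := hmu₀
  obtain ⟨hl1, hl2⟩ := hl
  obtain ⟨hm1, hm2⟩ := hm
  have hpi := Real.pi_pos
  constructor
  · -- the convergence statement
    have e1 : Complex.exp ((2 * lam₀ : ℝ) * Complex.I) ≠ 1 :=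
      exp_ne_one_of_ne (ne_of_gt (by linarith : (0:ℝ) < 2 * lam₀))
        (by rw [abs_of_pos (by linarith)]; linarith)
    have e2 : Complex.exp ((2 * l : ℝ) * Complex.I) ≠ 1 :=
      exp_ne_one_of_ne (ne_of_gt (by linarith : (0:ℝ) < 2 * l))
        (by rw [abs_of_pos (by linarith)]; linarith)
    have e3 : Complex.exp ((lam₀ + l : ℝ) * Complex.I) ≠ 1 :=
      exp_ne_one_of_ne (ne_of_gt (by linarith : (0:ℝ) < lam₀ + l))
        (by rw [abs_of_pos (by linarith)]; linarith)
    have e4 : Complex.exp ((lam₀ - l : ℝ) * Complex.I) ≠ 1 ∨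
        Complex.exp ((mu₀ - m : ℝ) * Complex.I) ≠ 1 := by
      rcases eq_or_ne lam₀ l with hq | hq
      · right
        have hmm : mu₀ ≠ m := by
          intro hmm; exact hne (by rw [hq, hmm])
        exact exp_ne_one_of_ne (sub_ne_zero.2 hmm)
          (abs_lt.2 ⟨by linarith, by linarith⟩)
      · left
        exact exp_ne_one_of_ne (sub_ne_zero.2 hq)
          (abs_lt.2 ⟨by linarith, by linarith⟩)
    have hfun : (fun TS : ℕ × ℕ =>
          (1 / ((TS.1 : ℝ) * (TS.2 : ℝ))) *
            ∑ t ∈ Finset.Icc 1 TS.1, ∑ s ∈ Finset.Icc 1 TS.2,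
              (A₀ * Real.cos (lam₀ * t + mu₀ * s) + B₀ * Real.sin (lam₀ * t + mu₀ * s)
                - A * Real.cos (l * t + m * s) - B * Real.sin (l * t + m * s)) ^ 2)
        = fun TS : ℕ × ℕ =>
            (A₀ ^ 2 + B₀ ^ 2 + A ^ 2 + B ^ 2) / 2 *
              (((TS.1 : ℝ) * (TS.2 : ℝ)) / ((TS.1 : ℝ) * (TS.2 : ℝ)))
            + (A₀ ^ 2 - B₀ ^ 2) / 2 * avC (2 * lam₀) (2 * mu₀) TS
            + A₀ * B₀ * avS (2 * lam₀) (2 * mu₀) TS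
            + (A ^ 2 - B ^ 2) / 2 * avC (2 * l) (2 * m) TS
            + A * B * avS (2 * l) (2 * m) TS
            + (-(A₀ * A) - B₀ * B) * avC (lam₀ - l) (mu₀ - m) TS
            + (B₀ * B - A₀ * A) * avC (lam₀ + l) (mu₀ + m) TS
            + (-(A₀ * B) - B₀ * A) * avS (lam₀ + l) (mu₀ + m) TS
            + (A₀ * B - B₀ * A) * avS (lam₀ - l) (mu₀ - m) TS := by
      funext TS
      obtain ⟨T, S⟩ := TS
      simp only [avC, avS]
      rw [show (∑ t ∈ Finset.Icc 1 T, ∑ s ∈ Finset.Icc 1 S,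
          (A₀ * Real.cos (lam₀ * t + mu₀ * s) + B₀ * Real.sin (lam₀ * t + mu₀ * s)
            - A * Real.cos (l * t + m * s) - B * Real.sin (l * t + m * s)) ^ 2)
        = ∑ t ∈ Finset.Icc 1 T, ∑ s ∈ Finset.Icc 1 S,
            ((A₀ ^ 2 + B₀ ^ 2 + A ^ 2 + B ^ 2) / 2
              + (A₀ ^ 2 - B₀ ^ 2) / 2 * Real.cos ((2 * lam₀) * t + (2 * mu₀) * s)
              + A₀ * B₀ * Real.sin ((2 * lam₀) * t + (2 * mu₀) * s)
              + (A ^ 2 - B ^ 2) / 2 * Real.cos ((2 * l) * t + (2 * m) * s)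
              + A * B * Real.sin ((2 * l) * t + (2 * m) * s)
              + (-(A₀ * A) - B₀ * B) * Real.cos ((lam₀ - l) * t + (mu₀ - m) * s)
              + (B₀ * B - A₀ * A) * Real.cos ((lam₀ + l) * t + (mu₀ + m) * s)
              + (-(A₀ * B) - B₀ * A) * Real.sin ((lam₀ + l) * t + (mu₀ + m) * s)
              + (A₀ * B - B₀ * A) * Real.sin ((lam₀ - l) * t + (mu₀ - m) * s))
        from Finset.sum_congr rfl fun t _ => Finset.sum_congr rfl fun s _ =>
          key_identity A₀ B₀ A B lam₀ mu₀ l m t s]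
      simp only [Finset.sum_add_distrib, ← Finset.mul_sum, Finset.sum_const,
        Nat.card_Icc, Nat.add_sub_cancel, nsmul_eq_mul]
      ring
    rw [hfun]
    have t0 : Tendsto (fun TS : ℕ × ℕ =>
        (A₀ ^ 2 + B₀ ^ 2 + A ^ 2 + B ^ 2) / 2 *
          (((TS.1 : ℝ) * (TS.2 : ℝ)) / ((TS.1 : ℝ) * (TS.2 : ℝ))))
        (atTop ×ˢ atTop) (𝓝 ((A₀ ^ 2 + B₀ ^ 2 + A ^ 2 + B ^ 2) / 2)) := by
      refine Tendsto.congr' ?_ tendsto_const_nhds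
      filter_upwards [(eventually_ge_atTop 1).prod_inl atTop,
        (eventually_ge_atTop 1).prod_inr atTop] with TS h1 h2
      have h1' : (0:ℝ) < TS.1 := by exact_mod_cast h1
      have h2' : (0:ℝ) < TS.2 := by exact_mod_cast h2
      rw [div_self (by positivity), mul_one]
    have H1 := t0.add
      ((avC_tendsto (2 * lam₀) (2 * mu₀) (Or.inl e1)).const_mul ((A₀ ^ 2 - B₀ ^ 2) / 2))
    have H2 := H1.add
      ((avS_tendsto (2 * lam₀) (2 * mu₀) (Or.inl e1)).const_mul (A₀ * B₀))
    have H3 := H2.add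
      ((avC_tendsto (2 * l) (2 * m) (Or.inl e2)).const_mul ((A ^ 2 - B ^ 2) / 2))
    have H4 := H3.add
      ((avS_tendsto (2 * l) (2 * m) (Or.inl e2)).const_mul (A * B))
    have H5 := H4.add
      ((avC_tendsto (lam₀ - l) (mu₀ - m) e4).const_mul (-(A₀ * A) - B₀ * B))
    have H6 := H5.add
      ((avC_tendsto (lam₀ + l) (mu₀ + m) (Or.inl e3)).const_mul (B₀ * B - A₀ * A))
    have H7 := H6.add
      ((avS_tendsto (lam₀ + l) (mu₀ + m) (Or.inl e3)).const_mul (-(A₀ * B) - B₀ * A))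
    have H8 := H7.add
      ((avS_tendsto (lam₀ - l) (mu₀ - m) e4).const_mul (A₀ * B - B₀ * A))
    simpa using H8
  · -- positivity
    intro hAB
    rcases hAB with h | h
    · have h' : A₀ ≠ 0 ∨ B₀ ≠ 0 := by
        by_contra hc; push_neg at hc; exact h (by simp [hc.1, hc.2])
      rcases h' with h' | h'
      · nlinarith [sq_pos_of_ne_zero h', sq_nonneg B₀, sq_nonneg A, sq_nonneg B]
      · nlinarith [sq_pos_of_ne_zero h', sq_nonneg A₀, sq_nonneg A, sq_nonneg B]
    · have h' : A ≠ 0 ∨ B ≠ 0 := by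
        by_contra hc; push_neg at hc; exact h (by simp [hc.1, hc.2])
      rcases h' with h' | h'
      · nlinarith [sq_pos_of_ne_zero h', sq_nonneg A₀, sq_nonneg B₀, sq_nonneg B]
      · nlinarith [sq_pos_of_ne_zero h', sq_nonneg A₀, sq_nonneg B₀, sq_nonneg A]
end

section
/- The 4×4 symmetric matrix Σ with rows (1/2, 0, B/4, B/4), (0, 1/2, −A/4, −A/4), (B/4, −A/4, (A²+B²)/6, (A²+B²)/8), (B/4, −A/4, (A²+B²)/8, (A²+B²)/6) is positive definite whenever (A, B) ≠ (0, 0). -/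
/-- The asymptotic information-type matrix `Σ` of the LAD estimators of a
one-component 2-D sinusoidal model is positive definite whenever the amplitude
pair `(A, B)` is nonzero. -/
theorem stmt_18 (A B : ℝ) (hAB : (A, B) ≠ ((0 : ℝ), (0 : ℝ))) :
    (!![1 / 2, 0, B / 4, B / 4;
        0, 1 / 2, -A / 4, -A / 4;
        B / 4, -A / 4, (A ^ 2 + B ^ 2) / 6, (A ^ 2 + B ^ 2) / 8;
        B / 4, -A / 4, (A ^ 2 + B ^ 2) / 8, (A ^ 2 + B ^ 2) / 6] : Matrix (Fin 4) (Fin 4) ℝ).PosDef := by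
  have hc : 0 < A ^ 2 + B ^ 2 := by
    rcases (Prod.mk.injEq .. ▸ hAB : ¬(A = 0 ∧ B = 0)) |> not_and_or.mp with h | h
    · positivity
    · positivity
  rw [Matrix.posDef_iff_dotProduct_mulVec]
  constructor
  · show _ = _
    ext i j
    fin_cases i <;> fin_cases j <;>
      simp [Matrix.conjTranspose_apply, Matrix.vecHead, Matrix.vecTail]
  · intro x hx
    have hx' : ¬(x 0 = 0 ∧ x 1 = 0 ∧ x 2 = 0 ∧ x 3 = 0) := by
      intro ⟨h0, h1, h2, h3⟩
      apply hx
      funext i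
      fin_cases i <;> assumption
    obtain ⟨a, ha⟩ : ∃ a, x 0 = a := ⟨_, rfl⟩
    obtain ⟨b, hb⟩ : ∃ b, x 1 = b := ⟨_, rfl⟩
    obtain ⟨c, hcc⟩ : ∃ c, x 2 = c := ⟨_, rfl⟩
    obtain ⟨d, hd⟩ : ∃ d, x 3 = d := ⟨_, rfl⟩
    rw [ha, hb, hcc, hd] at hx'
    simp only [dotProduct, Matrix.mulVec, dotProduct, Fin.sum_univ_four,
      Matrix.cons_val', Matrix.cons_val_zero, Matrix.cons_val_one, Matrix.head_cons,
      Matrix.empty_val', Matrix.cons_val_fin_one, star_trivial,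
      Matrix.cons_val_two, Matrix.cons_val_three, Matrix.tail_cons,
      Matrix.vecHead, Matrix.vecTail, Matrix.of_apply, Function.comp,
      Matrix.cons_val_succ, Fin.succ_zero_eq_one,
      ha, hb, hcc, hd]
    have key : (0:ℝ) < 1/2 * (a + B*(c+d)/2)^2 + 1/2 * (b - A*(c+d)/2)^2
        + (A^2+B^2) * (c^2+d^2) / 24 := by
      by_cases h : c = 0 ∧ d = 0
      · obtain ⟨h2, h3⟩ := h
        subst h2; subst h3
        have : a ≠ 0 ∨ b ≠ 0 := by tauto
        rcases this with h | h <;>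
          nlinarith [sq_nonneg a, sq_nonneg b, sq_pos_of_ne_zero h]
      · have : c ≠ 0 ∨ d ≠ 0 := by tauto
        rcases this with h | h <;>
          nlinarith [sq_nonneg (a + B*(c+d)/2), sq_nonneg (b - A*(c+d)/2),
            mul_pos hc (sq_pos_of_ne_zero h), sq_nonneg c, sq_nonneg d]
    nlinarith [key]
end
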